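/- With E(c) = {v ∈ ℝ^n : ∑_i k_i(θ)v_i² + b∑_{p≠q}(v_p − v_q)² ≤ c} and J(c) the segment from −(√c,…,√c) to (√c,…,√c): as b → ∞, E(c) converges to J(c) in Hausdorff distance, uniformly in θ ∈ T^n. -/

import Mathlib

noncomputable section

/-- The `n`-torus `T^n`. -/
abbrev Torus (n : ℕ) : Type := Fin n → AddCircle (1 : ℝ)

/-- The quadratic form `Q(v) = ∑ᵢ kᵢ(θ)vᵢ² + b ∑_{p≠q} (v_p − v_q)²`. -/
def Qform (n : ℕ) (k : Fin n → Torus n → ℝ) (b : ℝ)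
    (v : Fin n → ℝ) (θ : Torus n) : ℝ :=
  ∑ i, k i θ * v i ^ 2 + b * ∑ p, ∑ q, if p ≠ q then (v p - v q) ^ 2 else 0

open Finset in
lemma offdiag_identity (n : ℕ) (v : Fin n → ℝ) (m : ℝ)
    (hm : ∑ i, v i = (n : ℝ) * m) :
    ∑ p, ∑ q, (if p ≠ q then (v p - v q) ^ 2 else 0)
      = 2 * n * ∑ i, (v i - m) ^ 2 := by
  have h1 : ∀ p : Fin n, ∑ q, (if p ≠ q then (v p - v q) ^ 2 else 0)
      = ∑ q, (v p - v q) ^ 2 := by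
    intro p
    refine Finset.sum_congr rfl fun q _ => ?_
    by_cases h : p = q
    · subst h; simp
    · simp [h]
  have h2 : ∀ p : Fin n, ∑ q, (v p - v q) ^ 2
      = (n : ℝ) * v p ^ 2 - 2 * v p * (∑ i, v i) + ∑ i, v i ^ 2 := by
    intro p
    have e : ∀ q : Fin n, (v p - v q) ^ 2 = v p ^ 2 - 2 * v p * v q + v q ^ 2 :=
      fun q => by ring
    rw [Finset.sum_congr rfl fun q _ => e q, Finset.sum_add_distrib,
      Finset.sum_sub_distrib, Finset.sum_const, Finset.card_univ, Fintype.card_fin,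
      nsmul_eq_mul, ← Finset.mul_sum]
  have h3 : ∑ i, (v i - m) ^ 2
      = (∑ i, v i ^ 2) - 2 * m * (∑ i, v i) + (n : ℝ) * m ^ 2 := by
    have e : ∀ i : Fin n, (v i - m) ^ 2 = v i ^ 2 - 2 * m * v i + m ^ 2 :=
      fun i => by ring
    rw [Finset.sum_congr rfl fun i _ => e i, Finset.sum_add_distrib,
      Finset.sum_sub_distrib, Finset.sum_const, Finset.card_univ, Fintype.card_fin,
      nsmul_eq_mul, ← Finset.mul_sum]
  rw [Finset.sum_congr rfl fun p _ => (h1 p).trans (h2 p), Finset.sum_add_distrib,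
    Finset.sum_sub_distrib, Finset.sum_const, Finset.card_univ, Fintype.card_fin,
    nsmul_eq_mul, ← Finset.mul_sum, ← Finset.sum_mul, ← Finset.mul_sum, h3, hm]
  ring


set_option maxHeartbeats 2000000 in
open Finset in
/-- As `b → ∞`, the sublevel set `E(c) = {v : Q(v) ≤ c}` converges in
Hausdorff distance to the segment `J(c)` from `−(√c,…,√c)` to `(√c,…,√c)`,
uniformly in `θ ∈ T^n`. -/
theorem sublevel_hausdorff_convergence (n : ℕ) (hn : 0 < n)
    (k : Fin n → Torus n → ℝ) (hk : ∀ i, Continuous (k i))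
    (hsum : ∀ θ, ∑ i, k i θ = 1) (c : ℝ) (hc : 0 < c) :
    ∀ ε > 0, ∃ b₀ : ℝ, ∀ b ≥ b₀, ∀ θ : Torus n,
      Metric.hausdorffDist {v : Fin n → ℝ | Qform n k b v θ ≤ c}
        (segment ℝ (fun _ => -Real.sqrt c) (fun _ => Real.sqrt c)) < ε := by
  intro ε hε
  -- uniform bound on k
  obtain ⟨K, hK1, hK⟩ : ∃ K : ℝ, 1 ≤ K ∧ ∀ i θ, |k i θ| ≤ K := by
    have hbd : ∀ i : Fin n, ∃ C : ℝ, ∀ θ : Torus n, |k i θ| ≤ C := by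
      intro i
      obtain ⟨C, hC⟩ :=
        (isCompact_univ (X := Torus n)).exists_bound_of_continuousOn (hk i).continuousOn
      exact ⟨C, fun θ => by simpa using hC θ (Set.mem_univ θ)⟩
    choose C0 hC0 using hbd
    refine ⟨1 + ∑ i, |C0 i|, ?_, ?_⟩
    · have : 0 ≤ ∑ i, |C0 i| := Finset.sum_nonneg fun i _ => abs_nonneg _
      linarith
    · intro i θ
      have h1 : C0 i ≤ |C0 i| := le_abs_self _
      have h2 : |C0 i| ≤ ∑ j, |C0 j| :=
        Finset.single_le_sum (f := fun j => |C0 j|) (fun j _ => abs_nonneg _)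
          (Finset.mem_univ i)
      have := hC0 i θ
      linarith
  have hN : 1 ≤ (n : ℝ) := by exact_mod_cast hn
  have hKN : (0:ℝ) ≤ K * n := by nlinarith
  set s := Real.sqrt c with hsdef
  have hs : 0 < s := Real.sqrt_pos.mpr hc
  have hs2 : s ^ 2 = c := Real.sq_sqrt hc.le
  have hr2c : 0 ≤ Real.sqrt (2 * c) := Real.sqrt_nonneg _
  clear_value s
  set C : ℝ := 1 + (2 * K * n * Real.sqrt (2 * c) + K * n) / (2 * s) with hCdef
  have hC1 : 1 ≤ C := by
    have h0 : 0 ≤ (2 * K * n * Real.sqrt (2 * c) + K * n) / (2 * s) := by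
      apply div_nonneg _ (by linarith)
      nlinarith
    rw [hCdef]; linarith
  have hCpos : 0 < C := by linarith
  clear_value C
  set δ : ℝ := min 1 (ε / (2 * C)) with hδdef
  have hδpos : 0 < δ := lt_min one_pos (div_pos hε (by linarith))
  have hδ1 : δ ≤ 1 := min_le_left _ _
  have hCδ : C * δ ≤ ε / 2 := by
    have h1 : δ ≤ ε / (2 * C) := min_le_right _ _
    have h2 : C * δ ≤ C * (ε / (2 * C)) := mul_le_mul_of_nonneg_left h1 hCpos.le
    have hCne : C ≠ 0 := ne_of_gt hCpos
    have h3 : C * (ε / (2 * C)) = ε / 2 := by field_simp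
    linarith
  have hCd0 : 0 ≤ (C - 1) * δ := mul_nonneg (by linarith) hδpos.le
  clear_value δ
  set B : ℝ := max 1 (c / δ ^ 2) with hBdef
  have hB1 : 1 ≤ B := le_max_left _ _
  have hBc0 : c / δ ^ 2 ≤ B := le_max_right _ _
  clear_value B
  refine ⟨(B + K * n + 2 * K ^ 2 * (n:ℝ) ^ 2) / (2 * n), fun b hb θ => ?_⟩
  have hbpos : 0 < b := by
    have hnum : (0:ℝ) < B + K * n + 2 * K ^ 2 * (n:ℝ) ^ 2 := by nlinarith
    have h0 : (0:ℝ) < (B + K * n + 2 * K ^ 2 * (n:ℝ) ^ 2) / (2 * n) :=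
      div_pos hnum (by linarith)
    linarith [le_trans h0.le hb]
  have hBb : B ≤ 2 * b * n - K * n - 2 * K ^ 2 * (n:ℝ) ^ 2 := by
    have hb' := hb
    rw [ge_iff_le, div_le_iff₀ (by linarith : (0:ℝ) < 2 * n)] at hb'
    nlinarith
  -- direction 1: every point of the sublevel set is close to the segment
  have dir1 : ∀ v ∈ {v : Fin n → ℝ | Qform n k b v θ ≤ c},
      ∃ y ∈ segment ℝ (fun _ : Fin n => -s) (fun _ => s), dist v y ≤ ε / 2 := by
    intro v hv
    simp only [Set.mem_setOf_eq] at hv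
    set m : ℝ := (∑ i, v i) / n with hmdef
    have hnne : ((n:ℝ)) ≠ 0 := by linarith
    have hm : ∑ i, v i = (n:ℝ) * m := by
      rw [hmdef]; field_simp
    clear_value m
    set S : ℝ := ∑ i, (v i - m) ^ 2 with hSdef
    have hS0 : 0 ≤ S := Finset.sum_nonneg fun i _ => sq_nonneg _
    set σ := Real.sqrt S with hσdef
    have hσ0 : 0 ≤ σ := Real.sqrt_nonneg _
    have hσ2 : σ ^ 2 = S := Real.sq_sqrt hS0
    have hσS : σ = Real.sqrt S := rfl
    clear_value σ
    have hQ : (∑ i, k i θ * v i ^ 2) + b * (2 * n * S) ≤ c := by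
      have hid := offdiag_identity n v m hm
      unfold Qform at hv
      rw [hid] at hv
      exact hv
    have hw : ∀ i, |v i - m| ≤ σ := by
      intro i
      have h1 : (v i - m) ^ 2 ≤ S :=
        Finset.single_le_sum (f := fun j => (v j - m) ^ 2) (fun j _ => sq_nonneg _)
          (Finset.mem_univ i)
      rw [hσS]
      calc |v i - m| = Real.sqrt ((v i - m) ^ 2) := (Real.sqrt_sq_eq_abs _).symm
      _ ≤ Real.sqrt S := Real.sqrt_le_sqrt h1
    clear_value S
    have hA : |(∑ i, k i θ * v i ^ 2) - m ^ 2| ≤ K * n * (S + 2 * |m| * σ) := by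
      have e0 : ∑ i, k i θ * m ^ 2 = m ^ 2 := by
        rw [← Finset.sum_mul, hsum θ, one_mul]
      have e1 : (∑ i, k i θ * v i ^ 2) - m ^ 2 = ∑ i, k i θ * (v i ^ 2 - m ^ 2) := by
        rw [Finset.sum_congr rfl fun i _ =>
          (mul_sub (k i θ) (v i ^ 2) (m ^ 2) : k i θ * (v i ^ 2 - m ^ 2) = _),
          Finset.sum_sub_distrib, e0]
      rw [e1]
      calc |∑ i, k i θ * (v i ^ 2 - m ^ 2)| ≤ ∑ i, |k i θ * (v i ^ 2 - m ^ 2)| :=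
            Finset.abs_sum_le_sum_abs _ _
      _ ≤ ∑ _i : Fin n, K * (S + 2 * |m| * σ) := by
          refine Finset.sum_le_sum fun i _ => ?_
          rw [abs_mul]
          have h1 : |v i ^ 2 - m ^ 2| ≤ S + 2 * |m| * σ := by
            rw [show v i ^ 2 - m ^ 2 = (v i - m) * ((v i - m) + 2 * m) by ring, abs_mul]
            have h2 : |(v i - m) + 2 * m| ≤ σ + 2 * |m| := by
              calc |(v i - m) + 2 * m| ≤ |v i - m| + |2 * m| := abs_add_le _ _
              _ ≤ σ + 2 * |m| := by
                  rw [abs_mul, abs_two]; exact add_le_add (hw i) le_rfl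
            calc |v i - m| * |(v i - m) + 2 * m| ≤ σ * (σ + 2 * |m|) :=
                  mul_le_mul (hw i) h2 (abs_nonneg _) hσ0
            _ = S + 2 * |m| * σ := by rw [← hσ2]; ring
          exact mul_le_mul (hK i θ) h1 (abs_nonneg _) (by linarith)
      _ = K * n * (S + 2 * |m| * σ) := by
          rw [Finset.sum_const, Finset.card_univ, Fintype.card_fin, nsmul_eq_mul]
          ring
    have hAl : m ^ 2 - K * n * (S + 2 * |m| * σ) ≤ ∑ i, k i θ * v i ^ 2 := by
      have := (abs_le.mp hA).1; linarith
    have hbig : m ^ 2 ≤ c + K * n * S + 2 * K * n * |m| * σ - 2 * b * n * S := by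
      linarith only [hQ, hAl]
    have hAM : 2 * K * n * |m| * σ ≤ m ^ 2 / 2 + 2 * (K * n) ^ 2 * σ ^ 2 := by
      nlinarith only [sq_nonneg (|m| - 2 * K * n * σ), sq_abs m]
    have hmain : m ^ 2 / 2 + B * S ≤ c := by
      have h1 : B * S ≤ (2 * b * n - K * n - 2 * K ^ 2 * (n:ℝ) ^ 2) * S :=
        mul_le_mul_of_nonneg_right hBb hS0
      rw [hσ2] at hAM
      linarith only [hbig, hAM, h1]
    have hm2c : m ^ 2 ≤ 2 * c := by
      linarith only [hmain, mul_nonneg (by positivity : (0:ℝ) ≤ (1:ℝ)) hS0, mul_nonneg (le_trans zero_le_one hB1) hS0]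
    have hMle : |m| ≤ Real.sqrt (2 * c) := by
      calc |m| = Real.sqrt (m ^ 2) := (Real.sqrt_sq_eq_abs _).symm
      _ ≤ Real.sqrt (2 * c) := Real.sqrt_le_sqrt hm2c
    have hSδ : S ≤ δ ^ 2 := by
      have hBc : c ≤ B * δ ^ 2 := by
        have h1 := hBc0
        rw [div_le_iff₀ (by positivity)] at h1
        linarith
      have hBS : B * S ≤ B * δ ^ 2 := by linarith only [hmain, hBc, sq_nonneg m]
      exact (mul_le_mul_iff_right₀ (by linarith : (0:ℝ) < B)).mp hBS
    have hσδ : σ ≤ δ := by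
      rw [hσS]
      calc Real.sqrt S ≤ Real.sqrt (δ ^ 2) := Real.sqrt_le_sqrt hSδ
      _ = δ := Real.sqrt_sq hδpos.le
    have hCs : 2 * s * (C - 1) = 2 * K * n * Real.sqrt (2 * c) + K * n := by
      rw [hCdef]
      have : s ≠ 0 := ne_of_gt hs
      field_simp
      ring
    have hCsδ : 2 * s * (C - 1) * δ = (2 * K * n * Real.sqrt (2 * c) + K * n) * δ := by
      rw [show 2 * s * (C - 1) * δ = (2 * s * (C - 1)) * δ by ring, hCs]
    have hmc : m ^ 2 ≤ c + 2 * s * (C - 1) * δ := by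
      rw [hCsδ]
      have h2 : |m| * σ ≤ Real.sqrt (2 * c) * δ := mul_le_mul hMle hσδ hσ0 hr2c
      have h3 : S ≤ δ := by
        linarith only [hSδ, mul_nonneg hδpos.le (sub_nonneg.mpr hδ1)]
      have h4 : (0:ℝ) ≤ 2 * b * (n:ℝ) * S :=
        mul_nonneg (mul_nonneg (by linarith only [hbpos] : (0:ℝ) ≤ 2 * b)
          (by linarith only [hN] : (0:ℝ) ≤ (n:ℝ))) hS0
      have h5 : K * n * S ≤ K * n * δ := mul_le_mul_of_nonneg_left h3 hKN
      have h6 : 2 * K * n * (|m| * σ) ≤ 2 * K * n * (Real.sqrt (2 * c) * δ) :=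
        mul_le_mul_of_nonneg_left h2 (by linarith)
      linarith only [hbig, h4, h5, h6]
    have hMc : |m| ≤ s + (C - 1) * δ := by
      have hR0 : 0 ≤ s + (C - 1) * δ := by linarith only [hs, hCd0]
      have h1 : m ^ 2 ≤ (s + (C - 1) * δ) ^ 2 := by
        linarith only [sq_nonneg ((C - 1) * δ), hmc, hs2]
      calc |m| = Real.sqrt (m ^ 2) := (Real.sqrt_sq_eq_abs _).symm
      _ ≤ Real.sqrt ((s + (C - 1) * δ) ^ 2) := Real.sqrt_le_sqrt h1
      _ = s + (C - 1) * δ := Real.sqrt_sq hR0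
    have hMm := abs_le.mp hMc
    set t : ℝ := max (-s) (min s m) with htdef
    clear_value t
    have htabs : |t| ≤ s := by
      rw [htdef, abs_le]
      exact ⟨le_max_left _ _, max_le (by linarith) (min_le_left _ _)⟩
    have hmt : |m - t| ≤ (C - 1) * δ := by
      rcases le_total m (-s) with h | h
      · have ht' : t = -s := by
          rw [htdef, min_eq_right (by linarith), max_eq_left h]
        rw [ht', abs_of_nonpos (by linarith)]
        linarith [hMm.1]
      · rcases le_total s m with h2 | h2
        · have ht' : t = s := by
            rw [htdef, min_eq_left h2, max_eq_right (by linarith)]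
          rw [ht', abs_of_nonneg (by linarith)]
          linarith [hMm.2]
        · have ht' : t = m := by
            rw [htdef, min_eq_right h2, max_eq_right h]
          rw [ht']; simpa using hCd0
    have htb := abs_le.mp htabs
    refine ⟨fun _ => t, ?_, ?_⟩
    · refine ⟨(s - t) / (2 * s), (s + t) / (2 * s), ?_, ?_, ?_, ?_⟩
      · exact div_nonneg (by linarith [htb.2]) (by linarith)
      · exact div_nonneg (by linarith [htb.1]) (by linarith)
      · have : s ≠ 0 := ne_of_gt hs
        field_simp
        ring
      · funext i
        have : s ≠ 0 := ne_of_gt hs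
        show (s - t) / (2 * s) * (-s) + (s + t) / (2 * s) * s = t
        field_simp
        ring
    · rw [dist_pi_le_iff (by linarith : (0:ℝ) ≤ ε / 2)]
      intro i
      rw [Real.dist_eq]
      calc |v i - t| = |(v i - m) + (m - t)| := by
            rw [show v i - t = (v i - m) + (m - t) by ring]
      _ ≤ |v i - m| + |m - t| := abs_add_le _ _
      _ ≤ δ + (C - 1) * δ := add_le_add ((hw i).trans hσδ) hmt
      _ = C * δ := by ring
      _ ≤ ε / 2 := hCδ
  -- direction 2: the segment is inside the sublevel set
  have dir2 : ∀ y ∈ segment ℝ (fun _ : Fin n => -s) (fun _ : Fin n => s),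
      y ∈ {v : Fin n → ℝ | Qform n k b v θ ≤ c} := by
    intro y hy
    obtain ⟨a1, a2, ha1, ha2, h12, hy⟩ := hy
    have hyi : ∀ i, y i = (a2 - a1) * s := by
      intro i
      rw [← hy]
      simp only [Pi.add_apply, Pi.smul_apply, smul_eq_mul]
      ring
    have hoff : ∑ p, ∑ q, (if p ≠ q then (y p - y q) ^ 2 else 0) = 0 := by
      refine Finset.sum_eq_zero fun p _ => Finset.sum_eq_zero fun q _ => ?_
      rw [hyi p, hyi q]; simp
    have hQy : Qform n k b y θ = ((a2 - a1) * s) ^ 2 := by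
      unfold Qform
      rw [hoff, mul_zero, add_zero]
      have e : ∀ i : Fin n, k i θ * y i ^ 2 = ((a2 - a1) * s) ^ 2 * k i θ := by
        intro i; rw [hyi i]; ring
      rw [Finset.sum_congr rfl fun i _ => e i, ← Finset.mul_sum, hsum θ, mul_one]
    have h13 : (a2 - a1) ^ 2 ≤ 1 := by nlinarith only [mul_nonneg ha1 ha2, h12]
    simp only [Set.mem_setOf_eq, hQy]
    rw [mul_pow, hs2]
    have := mul_le_mul_of_nonneg_right h13 hc.le
    linarith
  have hfin := Metric.hausdorffDist_le_of_mem_dist (by linarith : (0:ℝ) ≤ ε / 2)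
    dir1 (fun y hy => ⟨y, dir2 y hy, by simp only [dist_self]; positivity⟩)
  exact lt_of_le_of_lt hfin (by linarith)
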